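/- Let γ ∈ ℝ^d with |γ| = 1, k ∈ ℝ, Ψ := I − 2γγᵀ, and θ(x) := Ψx + 2kγ. Let A : ℝ^d → (d×d symmetric positive-definite matrices) and b : ℝ^d → ℝ^d satisfy A(x) = Ψ A(θ(x)) Ψ and b(x) = Ψ b(θ(x)) for all x ∈ ℝ^d. Define p^{A,b}_t(x,y) := (2π)^{−d/2} (det(A(y)·t))^{−1/2} exp(−(1/(2t)) ⟨A(y)^{−1}(x − y − b(y)t), x − y − b(y)t⟩). Then for every t > 0, every x ∈ ℝ^d with ⟨x, γ⟩ = k, and every y ∈ ℝ^d, one has p^{A,b}_t(x, θ(y)) = p^{A,b}_t(x, y). -/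

import Mathlib

open Matrix

/-- The reflection matrix `Ψ := I − 2 γγᵀ`. -/
noncomputable def PsiMat {d : ℕ} (γ : Fin d → ℝ) : Matrix (Fin d) (Fin d) ℝ :=
  1 - (2:ℝ) • Matrix.vecMulVec γ γ

/-- The affine reflection `θ(x) := Ψx + 2kγ` across the hyperplane `{⟨x,γ⟩ = k}`. -/
noncomputable def reflMap {d : ℕ} (γ : Fin d → ℝ) (k : ℝ) (x : Fin d → ℝ) : Fin d → ℝ :=
  (PsiMat γ).mulVec x + (2 * k) • γ

/-- The Gaussian (Euler–Maruyama) kernel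
`p^{A,b}_t(x,y) := (2π)^{−d/2} (det(A(y)t))^{−1/2}
  exp(−(1/(2t)) ⟨A(y)⁻¹(x−y−b(y)t), x−y−b(y)t⟩)`. -/
noncomputable def pAb {d : ℕ} (A : (Fin d → ℝ) → Matrix (Fin d) (Fin d) ℝ)
    (b : (Fin d → ℝ) → (Fin d → ℝ)) (t : ℝ) (x y : Fin d → ℝ) : ℝ :=
  (2 * Real.pi) ^ (-(d : ℝ) / 2) * ((t • A y).det) ^ (-(1:ℝ) / 2)
    * Real.exp (-(1 / (2 * t))
        * ((A y)⁻¹.mulVec (x - y - t • b y) ⬝ᵥ (x - y - t • b y)))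


lemma vmv_mulVec {d : ℕ} (γ v : Fin d → ℝ) :
    (Matrix.vecMulVec γ γ).mulVec v = (γ ⬝ᵥ v) • γ := by
  ext i
  simp [Matrix.mulVec, Matrix.vecMulVec_apply, dotProduct, Finset.mul_sum, mul_comm,
    mul_left_comm]

lemma psi_mulVec {d : ℕ} (γ v : Fin d → ℝ) :
    (PsiMat γ).mulVec v = v - (2 * (γ ⬝ᵥ v)) • γ := by
  rw [PsiMat, Matrix.sub_mulVec, Matrix.smul_mulVec, vmv_mulVec, Matrix.one_mulVec,
    smul_smul]

lemma psi_transpose {d : ℕ} (γ : Fin d → ℝ) : (PsiMat γ)ᵀ = PsiMat γ := by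
  ext i j
  simp [PsiMat, Matrix.vecMulVec_apply, Matrix.one_apply, mul_comm, eq_comm]

lemma vmv_mul_vmv {d : ℕ} (γ : Fin d → ℝ) :
    Matrix.vecMulVec γ γ * Matrix.vecMulVec γ γ = (γ ⬝ᵥ γ) • Matrix.vecMulVec γ γ := by
  ext i j
  simp [Matrix.mul_apply, Matrix.vecMulVec_apply, dotProduct, Finset.sum_mul,
    Finset.mul_sum]
  ring_nf
  apply Finset.sum_congr rfl
  intro k _
  ring

lemma psi_sq {d : ℕ} (γ : Fin d → ℝ) (hγ : γ ⬝ᵥ γ = 1) :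
    PsiMat γ * PsiMat γ = 1 := by
  have h := vmv_mul_vmv γ
  rw [hγ, one_smul] at h
  simp only [PsiMat, sub_mul, mul_sub, mul_one, one_mul, Matrix.mul_smul, Matrix.smul_mul, h,
    smul_smul]
  module

lemma psi_gamma {d : ℕ} (γ : Fin d → ℝ) (hγ : γ ⬝ᵥ γ = 1) :
    (PsiMat γ).mulVec γ = -γ := by
  rw [psi_mulVec, hγ]
  module

lemma refl_refl {d : ℕ} (γ : Fin d → ℝ) (hγ : γ ⬝ᵥ γ = 1) (k : ℝ) (y : Fin d → ℝ) :
    reflMap γ k (reflMap γ k y) = y := by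
  simp only [reflMap, Matrix.mulVec_add, Matrix.mulVec_smul, Matrix.mulVec_mulVec,
    psi_sq γ hγ, Matrix.one_mulVec, psi_gamma γ hγ]
  module

lemma psi_det_sq {d : ℕ} (γ : Fin d → ℝ) (hγ : γ ⬝ᵥ γ = 1) :
    (PsiMat γ).det * (PsiMat γ).det = 1 := by
  rw [← Matrix.det_mul, psi_sq γ hγ, Matrix.det_one]

lemma psi_inv_conj {d : ℕ} (γ : Fin d → ℝ) (hγ : γ ⬝ᵥ γ = 1)
    (M : Matrix (Fin d) (Fin d) ℝ) (hM : IsUnit M.det) :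
    (PsiMat γ * M * PsiMat γ)⁻¹ = PsiMat γ * M⁻¹ * PsiMat γ := by
  apply Matrix.inv_eq_right_inv
  calc PsiMat γ * M * PsiMat γ * (PsiMat γ * M⁻¹ * PsiMat γ)
      = PsiMat γ * (M * ((PsiMat γ * PsiMat γ) * M⁻¹)) * PsiMat γ := by
        simp only [Matrix.mul_assoc]
    _ = 1 := by
        rw [psi_sq γ hγ, Matrix.one_mul, Matrix.mul_nonsing_inv M hM, Matrix.mul_one,
          psi_sq γ hγ]

lemma psi_dot {d : ℕ} (γ : Fin d → ℝ) (w v : Fin d → ℝ) :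
    (PsiMat γ).mulVec w ⬝ᵥ v = w ⬝ᵥ (PsiMat γ).mulVec v := by
  rw [dotProduct_comm, Matrix.dotProduct_mulVec, ← Matrix.mulVec_transpose,
    psi_transpose, dotProduct_comm]

/-- If `A` and `b` are symmetric under the reflection `θ`, i.e.
`A(x) = Ψ A(θ(x)) Ψ` and `b(x) = Ψ b(θ(x))`, then for every `t > 0`, every `x` in the
hyperplane `⟨x,γ⟩ = k` and every `y`, `p^{A,b}_t(x, θ(y)) = p^{A,b}_t(x, y)`. -/
theorem stmt_7 (d : ℕ) (γ : Fin d → ℝ) (hγ : γ ⬝ᵥ γ = 1) (k : ℝ)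
    (A : (Fin d → ℝ) → Matrix (Fin d) (Fin d) ℝ) (b : (Fin d → ℝ) → (Fin d → ℝ))
    (hAsymm : ∀ x, (A x).IsSymm) (hApos : ∀ x, (A x).PosDef)
    (hA : ∀ x, A x = PsiMat γ * A (reflMap γ k x) * PsiMat γ)
    (hb : ∀ x, b x = (PsiMat γ).mulVec (b (reflMap γ k x))) :
    ∀ t > (0:ℝ), ∀ x : Fin d → ℝ, x ⬝ᵥ γ = k → ∀ y : Fin d → ℝ,
      pAb A b t x (reflMap γ k y) = pAb A b t x y := by
  intro t ht x hx y
  set Ψ := PsiMat γ with hΨ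
  have hAz : A (reflMap γ k y) = Ψ * A y * Ψ := by
    have h := hA (reflMap γ k y); rwa [refl_refl γ hγ k y] at h
  have hbz : b (reflMap γ k y) = Ψ.mulVec (b y) := by
    have h := hb (reflMap γ k y); rwa [refl_refl γ hγ k y] at h
  have hdetU : IsUnit (A y).det := isUnit_iff_ne_zero.mpr (hApos y).det_pos.ne'
  have hdet : (t • A (reflMap γ k y)).det = (t • A y).det := by
    rw [hAz]
    have h1 : t • (Ψ * A y * Ψ) = Ψ * (t • A y) * Ψ := by
      rw [Matrix.mul_smul, Matrix.smul_mul]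
    rw [h1, Matrix.det_mul, Matrix.det_mul,
      show Ψ.det * (t • A y).det * Ψ.det = (Ψ.det * Ψ.det) * (t • A y).det from by ring,
      psi_det_sq γ hγ, one_mul]
  have hvec : Ψ.mulVec (x - reflMap γ k y - t • b (reflMap γ k y)) = x - y - t • b y := by
    rw [hbz, reflMap]
    simp only [Matrix.mulVec_sub, Matrix.mulVec_add, Matrix.mulVec_smul, Matrix.mulVec_mulVec,
      ← hΨ, psi_sq γ hγ, Matrix.one_mulVec, psi_gamma γ hγ]
    rw [hΨ, psi_mulVec, dotProduct_comm, hx]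
    simp only [psi_sq γ hγ, psi_gamma γ hγ, Matrix.one_mulVec]
    module
  have hquad : (A (reflMap γ k y))⁻¹.mulVec (x - reflMap γ k y - t • b (reflMap γ k y)) ⬝ᵥ
      (x - reflMap γ k y - t • b (reflMap γ k y))
      = (A y)⁻¹.mulVec (x - y - t • b y) ⬝ᵥ (x - y - t • b y) := by
    set v := x - reflMap γ k y - t • b (reflMap γ k y) with hv
    rw [hAz, hΨ, psi_inv_conj γ hγ _ hdetU, ← hΨ,
      show (Ψ * (A y)⁻¹ * Ψ).mulVec v = Ψ.mulVec ((A y)⁻¹.mulVec (Ψ.mulVec v)) from by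
        simp [← Matrix.mulVec_mulVec],
      hΨ, psi_dot, ← hΨ, hvec]
  rw [pAb, pAb, hdet, hquad]
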